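/- Let L = {x^a, y^b, z^c} with x < y < z, v = a+b+c+1, and a + b < z - x - 1. Then L has no x-growable realization. -/

import Mathlib

def pathLen (v p q : ℕ) : ℕ := min (Nat.dist p q) (v - Nat.dist p q)

def lengths (v : ℕ) (h : List ℕ) : Multiset ℕ :=
  (List.zipWith (pathLen v) h h.tail : List ℕ)

def IsHamPath (v : ℕ) (h : List ℕ) : Prop :=
  h.Nodup ∧ h.length = v ∧ ∀ p ∈ h, p < v

/-- The growth embedding at `m` with parameter `x`. -/
def gemb (m x p : ℕ) : ℕ := if p ≤ m then p else p + x

/-- The edge `e` of `K_v` has its length increased by the growth embedding. -/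
def EdgeIncr (v x m : ℕ) (e : ℕ × ℕ) : Prop :=
  pathLen v e.1 e.2 < pathLen (v + x) (gemb m x e.1) (gemb m x e.2)



-- countP over two-list zipWith as map over zip
lemma zipWith_eq_map_zip {α β γ : Type*} (f : α → β → γ) :
    ∀ (l : List α) (l' : List β),
      List.zipWith f l l' = (l.zip l').map (fun e => f e.1 e.2)
  | [], _ => by simp
  | _ :: _, [] => by simp
  | a :: l, b :: l' => by simp [zipWith_eq_map_zip f l l']

-- countP split
lemma countP_split {α : Type*} (l : List α) (p q : α → Bool) :
    l.countP p = l.countP (fun e => p e && q e) + l.countP (fun e => p e && !q e) := by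
  induction l with
  | nil => simp
  | cons a l ih =>
    simp only [List.countP_cons]
    cases hp : p a <;> cases hq : q a <;> simp [hp, hq] <;> omega

lemma countP_le_sum_countP {α : Type*} (l : List α) (P : α → Bool) (T : Finset ℕ)
    (Q : ℕ → α → Bool) (H : ∀ e ∈ l, P e = true → ∃ p ∈ T, Q p e = true) :
    l.countP P ≤ ∑ p ∈ T, l.countP (Q p) := by
  induction l with
  | nil => simp
  | cons a l ih =>
    have ihl := ih (fun e he hp => H e (List.mem_cons_of_mem _ he) hp)
    have hsum : ∑ p ∈ T, List.countP (Q p) (a :: l)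
        = (∑ p ∈ T, List.countP (Q p) l) + ∑ p ∈ T, (if Q p a = true then 1 else 0) := by
      rw [← Finset.sum_add_distrib]
      exact Finset.sum_congr rfl fun p _ => by rw [List.countP_cons]
    by_cases hPa : P a = true
    · obtain ⟨p₀, hp₀T, hp₀⟩ := H a List.mem_cons_self hPa
      have h2 : 1 ≤ ∑ p ∈ T, (if Q p a = true then 1 else 0) := by
        have h3 := Finset.single_le_sum (f := fun p => if Q p a = true then (1:ℕ) else 0)
          (fun p _ => Nat.zero_le _) hp₀T
        simp only [hp₀, if_true] at h3
        exact h3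
      rw [List.countP_cons, hsum]
      simp only [hPa, if_true]
      omega
    · rw [List.countP_cons, hsum, if_neg hPa]
      omega

lemma nodup_zip_tail {l : List ℕ} (h : l.Nodup) : (l.zip l.tail).Nodup := by
  have hm : (l.zip l.tail).map Prod.snd = l.tail :=
    List.map_snd_zip (by cases l <;> simp)
  have := h.tail
  rw [← hm] at this
  exact List.Nodup.of_map Prod.snd this

lemma length_le_card {α β : Type*} [DecidableEq β] (l : List α) (hl : l.Nodup)
    (f : α → β) (G : Finset β) (hinj : ∀ x ∈ l, ∀ y ∈ l, f x = f y → x = y)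
    (hmem : ∀ x ∈ l, f x ∈ G) : l.length ≤ G.card := by
  have hnd : (l.map f).Nodup := hl.map_on hinj
  have h1 : (l.map f).toFinset.card = (l.map f).length := List.toFinset_card_of_nodup hnd
  have h2 : (l.map f).toFinset ⊆ G := by
    intro b hb
    rw [List.mem_toFinset, List.mem_map] at hb
    obtain ⟨x, hx, rfl⟩ := hb
    exact hmem x hx
  calc l.length = (l.map f).length := (List.length_map _).symm
    _ = (l.map f).toFinset.card := h1.symm
    _ ≤ G.card := Finset.card_le_card h2

-- edge increase lemmas
lemma short_straddle_incr {v x m p q w : ℕ} (hx : 0 < x) (h1 : p ≤ m) (h2 : m < q)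
    (h3 : q = p + w) (h4 : 2 * w < v) :
    pathLen v p q < pathLen (v + x) (gemb m x p) (gemb m x q) := by
  subst h3
  simp only [pathLen, gemb, if_pos h1, if_neg (by omega : ¬ p + w ≤ m), Nat.dist]
  omega

lemma long_nonstraddle_incr {v x m p q : ℕ} (hx : 0 < x)
    (h1 : (p ≤ m ∧ q ≤ m) ∨ (m < p ∧ m < q)) (hd : v < 2 * Nat.dist p q)
    (hdv : Nat.dist p q < v) :
    pathLen v p q < pathLen (v + x) (gemb m x p) (gemb m x q) := by
  rcases h1 with ⟨h1, h2⟩ | ⟨h1, h2⟩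
  · rw [show gemb m x p = p from if_pos h1, show gemb m x q = q from if_pos h2]
    simp only [pathLen, Nat.dist] at hd hdv ⊢
    omega
  · rw [show gemb m x p = p + x from if_neg (by omega), show gemb m x q = q + x from if_neg (by omega)]
    simp only [pathLen, Nat.dist] at hd hdv ⊢
    omega



lemma pathLen_comm (v p q : ℕ) : pathLen v p q = pathLen v q p := by
  simp [pathLen, Nat.dist_comm]

def PZb (v z : ℕ) : ℕ × ℕ → Bool := fun e => pathLen v e.1 e.2 == z
def PIb (v x m : ℕ) : ℕ × ℕ → Bool := fun e =>
  decide (pathLen v e.1 e.2 < pathLen (v + x) (gemb m x e.1) (gemb m x e.2))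

/-- The Hamiltonian path `h` is `x`-growable at `m`: each vertex `p` with
`m - x < p ≤ m` is incident with exactly one path-edge whose length is increased
by the growth embedding, and no other path-edge has its length increased. -/
def Growable (v x m : ℕ) (h : List ℕ) : Prop :=
  x ≤ m + 1 ∧
  (∀ p : ℕ, m < p + x → p ≤ m →
    ((h.zip h.tail).countP fun e =>
      decide ((e.1 = p ∨ e.2 = p) ∧
        pathLen v e.1 e.2 < pathLen (v + x) (gemb m x e.1) (gemb m x e.2))) = 1) ∧
  ∀ e ∈ h.zip h.tail, EdgeIncr v x m e → ∃ p, m < p + x ∧ p ≤ m ∧ (e.1 = p ∨ e.2 = p)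

theorem stmt_5 (x y z a b c v : ℕ) (hxy : x < y) (hyz : y < z) (hx : 0 < x)
    (ha : 0 < a) (hb : 0 < b) (hc : 0 < c)
    (hv : v = a + b + c + 1) (hab : a + b < z - x - 1) :
    ¬ ∃ (h : List ℕ) (m : ℕ), IsHamPath v h ∧
      lengths v h = Multiset.replicate a x + Multiset.replicate b y + Multiset.replicate c z ∧
      Growable v x m h := by
  rintro ⟨h, m, ⟨hnd, hlen, hlt⟩, hL, hxm, hone, hcover⟩
  set E := h.zip h.tail with hE
  -- index characterization of edges
  have hidx : ∀ e ∈ E, ∃ i, ∃ hi : i + 1 < h.length, e = (h[i], h[i+1]) := by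
    intro e he
    rw [List.mem_iff_getElem] at he
    obtain ⟨i, hi, heq⟩ := he
    have hiE : i < (h.zip h.tail).length := hi
    rw [List.length_zip, List.length_tail] at hiE
    have hi1 : i + 1 < h.length := by omega
    refine ⟨i, hi1, ?_⟩
    rw [← heq]
    have : (h.zip h.tail)[i] = (h[i], h.tail[i]'(by rw [List.length_tail]; omega)) :=
      List.getElem_zip
    rw [this, List.getElem_tail]
  have hend : ∀ e ∈ E, e.1 < v ∧ e.2 < v := by
    intro e he
    obtain ⟨i, hi, rfl⟩ := hidx e he
    exact ⟨hlt _ (List.getElem_mem _), hlt _ (List.getElem_mem _)⟩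
  have hndE : E.Nodup := nodup_zip_tail hnd
  have hswap : ∀ e ∈ E, ∀ e' ∈ E, e.1 = e'.2 → e.2 = e'.1 → e.1 = e.2 := by
    intro e he e' he' h1 h2
    obtain ⟨i, hi, rfl⟩ := hidx e he
    obtain ⟨j, hj, rfl⟩ := hidx e' he'
    simp only at h1 h2
    rw [hnd.getElem_inj_iff] at h1 h2
    omega
  -- the count of z-edges is c
  have hc : E.countP (PZb v z) = c := by
    have h1 : Multiset.count z (lengths v h) = c := by
      rw [hL]
      simp [Multiset.count_replicate, (show x ≠ z by omega), (show y ≠ z by omega)]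
    rw [← h1, lengths, zipWith_eq_map_zip, Multiset.coe_count, List.count_eq_countP,
      List.countP_map]
    rfl
  -- existence of a z-edge gives 2z ≤ v
  have h2z : 2 * z ≤ v := by
    have h0 : 0 < E.countP (PZb v z) := by omega
    rw [List.countP_pos_iff] at h0
    obtain ⟨e, he, hez⟩ := h0
    have hez' : pathLen v e.1 e.2 = z := by simpa [PZb] using hez
    have := hend e he
    simp only [pathLen, Nat.dist] at hez'
    omega
  -- structure of z-edges
  have hdist : ∀ e ∈ E, pathLen v e.1 e.2 = z →
      Nat.dist e.1 e.2 = z ∨ Nat.dist e.1 e.2 = v - z := by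
    intro e he hez
    have := hend e he
    simp only [pathLen, Nat.dist] at hez ⊢
    omega
  -- Step 1 : at most x increasing edges
  have hIx : E.countP (PIb v x m) ≤ x := by
    set T : Finset ℕ := Finset.Ico (m + 1 - x) (m + 1) with hT
    have hle := countP_le_sum_countP E (PIb v x m) T
      (fun p e => decide ((e.1 = p ∨ e.2 = p) ∧
        pathLen v e.1 e.2 < pathLen (v + x) (gemb m x e.1) (gemb m x e.2)))
      (by
        intro e he hP
        have hP' : pathLen v e.1 e.2 < pathLen (v + x) (gemb m x e.1) (gemb m x e.2) := by
          simpa [PIb] using hP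
        obtain ⟨p, hp1, hp2, hp3⟩ := hcover e he hP'
        exact ⟨p, Finset.mem_Ico.2 ⟨by omega, by omega⟩, by
          simp only [decide_eq_true_eq]; exact ⟨hp3, hP'⟩⟩)
    calc E.countP (PIb v x m) ≤ _ := hle
      _ = ∑ _p ∈ T, 1 := Finset.sum_congr rfl (fun p hp => by
            rw [Finset.mem_Ico] at hp
            exact hone p (by omega) (by omega))
      _ = x := by rw [Finset.sum_const, smul_eq_mul, mul_one, hT, Nat.card_Ico]; omega
  -- Step 2 : at most v - z non-increasing z-edges
  have hN : E.countP (fun e => PZb v z e && !(PIb v x m e)) ≤ v - z := by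
    set Sshort : Finset ℕ :=
      (Finset.range (v - z)).filter (fun p => 2 * z = v ∨ ¬(p ≤ m ∧ m < p + z)) with hSs
    set Slong : Finset ℕ :=
      (Finset.range z).filter (fun p => 2 * z < v ∧ p ≤ m ∧ m < p + (v - z)) with hSl
    set G : Finset (ℕ × Bool) :=
      (Sshort.image (fun p => (p, false))) ∪ (Slong.image (fun p => (p, true))) with hG
    set l := E.filter (fun e => PZb v z e && !(PIb v x m e)) with hl
    have hlE : ∀ e ∈ l, e ∈ E := fun e he => List.mem_of_mem_filter he
    have hlprop : ∀ e ∈ l, pathLen v e.1 e.2 = z ∧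
        ¬ pathLen v e.1 e.2 < pathLen (v + x) (gemb m x e.1) (gemb m x e.2) := by
      intro e he
      have := List.of_mem_filter he
      simpa [PZb, PIb] using this
    -- ordered claim
    have claim : ∀ p0 q0 : ℕ, p0 < v → q0 < v → p0 < q0 → pathLen v p0 q0 = z →
        ¬ pathLen v p0 q0 < pathLen (v + x) (gemb m x p0) (gemb m x q0) →
        (p0, decide (v < 2 * Nat.dist p0 q0)) ∈ G := by
      intro p0 q0 hp0 hq0 hlt0 hz0 hni
      have hdd : Nat.dist p0 q0 = q0 - p0 := by simp [Nat.dist]; omega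
      have hdor : q0 - p0 = z ∨ q0 - p0 = v - z := by
        simp only [pathLen, hdd] at hz0; omega
      have hzle : z ≤ q0 - p0 ∧ z ≤ v - (q0 - p0) := by
        simp only [pathLen, hdd] at hz0; omega
      by_cases hdz : q0 - p0 = z
      · have hb : decide (v < 2 * Nat.dist p0 q0) = false := by
          simp only [decide_eq_false_iff_not, hdd, hdz]; omega
        rw [hb, hG]
        apply Finset.mem_union_left
        apply Finset.mem_image_of_mem
        rw [hSs, Finset.mem_filter, Finset.mem_range]
        refine ⟨by omega, ?_⟩
        by_contra hcon
        push_neg at hcon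
        obtain ⟨hne, hstr1, hstr2⟩ := hcon
        exact hni (short_straddle_incr (w := z) hx hstr1 (by omega) (by omega) (by omega))
      · have hdvz : q0 - p0 = v - z := by tauto
        have h2zv : 2 * z < v := by omega
        have hb : decide (v < 2 * Nat.dist p0 q0) = true := by
          simp only [decide_eq_true_eq, hdd, hdvz]; omega
        rw [hb, hG]
        apply Finset.mem_union_right
        apply Finset.mem_image_of_mem
        rw [hSl, Finset.mem_filter, Finset.mem_range]
        refine ⟨by omega, h2zv, ?_⟩
        by_contra hcon
        push_neg at hcon
        have hcase : (p0 ≤ m ∧ q0 ≤ m) ∨ (m < p0 ∧ m < q0) := by omega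
        exact hni (long_nonstraddle_incr hx hcase (by rw [hdd]; omega) (by rw [hdd]; omega))
    have hmem : ∀ e ∈ l, (min e.1 e.2, decide (v < 2 * Nat.dist e.1 e.2)) ∈ G := by
      intro e he
      obtain ⟨hez, heni⟩ := hlprop e he
      have hev := hend e (hlE e he)
      have hne : e.1 ≠ e.2 := by
        intro hcon
        simp only [pathLen, Nat.dist, hcon] at hez
        omega
      rcases Nat.lt_or_ge e.1 e.2 with hor | hor
      · have : min e.1 e.2 = e.1 := by omega
        rw [this]
        exact claim e.1 e.2 hev.1 hev.2 hor hez heni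
      · have hgt : e.2 < e.1 := by omega
        have h1 : min e.1 e.2 = e.2 := by omega
        have h2 : Nat.dist e.1 e.2 = Nat.dist e.2 e.1 := Nat.dist_comm _ _
        rw [h1, h2]
        refine claim e.2 e.1 hev.2 hev.1 hgt ?_ ?_
        · rw [← pathLen_comm]; exact hez
        · rw [← pathLen_comm, ← pathLen_comm (v+x)]; exact heni
    have hinj : ∀ e ∈ l, ∀ e' ∈ l,
        (min e.1 e.2, decide (v < 2 * Nat.dist e.1 e.2)) =
        (min e'.1 e'.2, decide (v < 2 * Nat.dist e'.1 e'.2)) → e = e' := by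
      intro e he e' he' heq
      obtain ⟨hez, -⟩ := hlprop e he
      obtain ⟨hez', -⟩ := hlprop e' he'
      have hde := hdist e (hlE e he) hez
      have hde' := hdist e' (hlE e' he') hez'
      rw [Prod.mk.injEq] at heq
      obtain ⟨hmin, hbool⟩ := heq
      have hiff : (v < 2 * Nat.dist e.1 e.2) ↔ (v < 2 * Nat.dist e'.1 e'.2) :=
        decide_eq_decide.1 hbool
      have hdeq : Nat.dist e.1 e.2 = Nat.dist e'.1 e'.2 := by omega
      have hzpos : 0 < z := by omega
      have hcases : (e.1 = e'.1 ∧ e.2 = e'.2) ∨ (e.1 = e'.2 ∧ e.2 = e'.1) := by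
        simp only [Nat.dist] at hdeq hde
        omega
      rcases hcases with ⟨h1, h2⟩ | ⟨h1, h2⟩
      · exact Prod.ext h1 h2
      · exfalso
        have := hswap e (hlE e he) e' (hlE e' he') h1 h2
        simp only [Nat.dist] at hde
        omega
    have hlen2 : l.length ≤ G.card :=
      length_le_card l (hndE.filter _)
        (fun e => (min e.1 e.2, decide (v < 2 * Nat.dist e.1 e.2))) G hinj hmem
    have hGcard : G.card ≤ v - z := by
      have hU : G.card ≤ Sshort.card + Slong.card := by
        calc G.card ≤ (Sshort.image (fun p => (p, false))).card +
            (Slong.image (fun p => (p, true))).card := Finset.card_union_le _ _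
          _ ≤ Sshort.card + Slong.card := by
            gcongr <;> exact Finset.card_image_le
      have hcompl : Sshort.card +
          ((Finset.range (v - z)).filter
            (fun p => ¬(2 * z = v ∨ ¬(p ≤ m ∧ m < p + z)))).card = v - z := by
        rw [hSs, Finset.card_filter_add_card_filter_not, Finset.card_range]
      have hinj2 : Slong.card ≤
          ((Finset.range (v - z)).filter
            (fun p => ¬(2 * z = v ∨ ¬(p ≤ m ∧ m < p + z)))).card := by
        apply Finset.card_le_card_of_injOn
          (fun p => p + ((m + 1 - z) - (m + 1 - (v - z))))
        · intro p hp
          simp only [Finset.mem_coe, hSl, Finset.mem_filter, Finset.mem_range] at hp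
          rw [Finset.mem_coe, Finset.mem_filter, Finset.mem_range]
          push_neg
          constructor
          · omega
          · constructor
            · omega
            · constructor <;> omega
        · intro a _ b _ hab
          simp only at hab
          omega
      omega
    rw [List.countP_eq_length_filter, ← hl]
    omega
  -- Step 3 : combine
  have hsplitc := countP_split E (PZb v z) (PIb v x m)
  have hmono : E.countP (fun e => PZb v z e && PIb v x m e) ≤ E.countP (PIb v x m) :=
    List.countP_mono_left (fun e _ hb => by
      simp only [Bool.and_eq_true] at hb; exact hb.2)
  omega
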